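/- Let X = ∏_{i=1}^d [a_i, b_i] with a_i < b_i for each i. For each i ∈ {1,…,d}, let a_i = x_{1i} < x_{2i} < ⋯ < x_{ñ_i i} = b_i be grid points of [a_i, b_i], let h_i = max_{1≤j≤ñ_i−1} (x_{(j+1)i} − x_{ji}), and let h = max_{1≤i≤d} h_i. Let f, g : X → ℝ be twice continuously differentiable with all second-order partial derivatives bounded in absolute value by M > 0 on X, and suppose g(x) = f(x) for every x ∈ X having at least one coordinate x_i equal to a grid point x_{ji}. Then sup_{x ∈ X} |g(x) − f(x)| ≤ 2M · min_{1≤i≤d} (b_i − a_i)^{1/2} · h^{3/2}. -/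

import Mathlib

open Set


private lemma taylor_aux {K s u : ℝ} (hK : 0 ≤ K) (hsu : s ≤ u) {φ φ₁ : ℝ → ℝ}
    (hφ : ∀ t ∈ Icc s u, HasDerivWithinAt φ (φ₁ t) (Icc s u) t)
    (hφ₁ : ∀ p q : ℝ, s ≤ p → p ≤ q → q ≤ u → |φ₁ q - φ₁ p| ≤ K * (q - p)) :
    |φ u - φ s - φ₁ s * (u - s)| ≤ K * (u - s) ^ 2 := by
  set χ : ℝ → ℝ := fun t => φ t - φ₁ s * t with hχ
  have hχd : ∀ t ∈ Icc s u, HasDerivWithinAt χ (φ₁ t - φ₁ s) (Icc s u) t := by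
    intro t ht
    exact (hφ t ht).sub ((hasDerivWithinAt_id t _).const_mul (φ₁ s) |>.congr_deriv (mul_one _))
  have key := norm_image_sub_le_of_norm_deriv_le_segment' hχd
    (C := K * (u - s)) (fun t ht => by
      rw [Real.norm_eq_abs]
      calc |φ₁ t - φ₁ s| ≤ K * (t - s) := hφ₁ s t le_rfl ht.1 (le_of_lt ht.2)
        _ ≤ K * (u - s) := by nlinarith [ht.1, le_of_lt ht.2]) u (right_mem_Icc.2 hsu)
  rw [Real.norm_eq_abs] at key
  have : χ u - χ s = φ u - φ s - φ₁ s * (u - s) := by simp [hχ]; ring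
  rw [this] at key
  nlinarith [key]

private lemma key1d_half {K s u : ℝ} (hK : 0 ≤ K) (hsu : s < u) {φ φ₁ : ℝ → ℝ}
    (hφ : ∀ t ∈ Icc s u, HasDerivWithinAt φ (φ₁ t) (Icc s u) t)
    (hφ₁ : ∀ p q : ℝ, s ≤ p → p ≤ q → q ≤ u → |φ₁ q - φ₁ p| ≤ K * (q - p))
    (h0s : φ s = 0) (h0u : φ u = 0) :
    ∀ t ∈ Icc s u, t - s ≤ (u - s) / 2 → |φ t| ≤ K * (u - s) ^ 2 := by
  have hT := taylor_aux hK hsu.le hφ hφ₁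
  rw [h0s, h0u] at hT
  have hφ₁s : |φ₁ s| ≤ K * (u - s) := by
    have h1 : |φ₁ s| * (u - s) = |φ₁ s * (u - s)| := by
      rw [abs_mul, abs_of_nonneg (by linarith : (0:ℝ) ≤ u - s)]
    have h2 : |φ₁ s * (u - s)| ≤ K * (u - s) ^ 2 := by
      have := hT; rw [show (0:ℝ) - 0 - φ₁ s * (u - s) = -(φ₁ s * (u - s)) by ring, abs_neg] at this
      exact this
    have h3 : (0:ℝ) < u - s := by linarith
    nlinarith [h1, h2, h3]
  intro t ht htmid
  have hts : s ≤ t := ht.1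
  have hsub : Icc s t ⊆ Icc s u := Icc_subset_Icc le_rfl ht.2
  have hT2 := taylor_aux hK hts (φ := φ) (φ₁ := φ₁)
    (fun r hr => (hφ r (hsub hr)).mono hsub)
    (fun p q hp hpq hq => hφ₁ p q hp hpq (le_trans hq ht.2))
  rw [h0s] at hT2
  have habs : |φ t| ≤ |φ t - 0 - φ₁ s * (t - s)| + |φ₁ s| * (t - s) := by
    have : |φ₁ s * (t - s)| = |φ₁ s| * (t - s) := by
      rw [abs_mul, abs_of_nonneg (by linarith : (0:ℝ) ≤ t - s)]
    calc |φ t| = |(φ t - 0 - φ₁ s * (t - s)) + φ₁ s * (t - s)| := by ring_nf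
      _ ≤ |φ t - 0 - φ₁ s * (t - s)| + |φ₁ s * (t - s)| := abs_add_le _ _
      _ = _ := by rw [this]
  have h4 : (t - s) ^ 2 ≤ ((u - s) / 2) ^ 2 := by nlinarith
  have h5 : K * (t - s) ^ 2 ≤ K * ((u - s) / 2) ^ 2 := mul_le_mul_of_nonneg_left h4 hK
  have h6 : |φ₁ s| * (t - s) ≤ K * (u - s) * (t - s) :=
    mul_le_mul_of_nonneg_right hφ₁s (by linarith)
  have h7 : K * (u - s) * (t - s) ≤ K * (u - s) * ((u - s) / 2) :=
    mul_le_mul_of_nonneg_left htmid (by nlinarith)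
  nlinarith [hT2, habs]

private lemma key1d {K s u : ℝ} (hK : 0 ≤ K) (hsu : s < u) {φ φ₁ : ℝ → ℝ}
    (hφ : ∀ t ∈ Icc s u, HasDerivWithinAt φ (φ₁ t) (Icc s u) t)
    (hφ₁ : ∀ p q : ℝ, s ≤ p → p ≤ q → q ≤ u → |φ₁ q - φ₁ p| ≤ K * (q - p))
    (h0s : φ s = 0) (h0u : φ u = 0) :
    ∀ t ∈ Icc s u, |φ t| ≤ K * (u - s) ^ 2 := by
  intro t ht
  rcases le_or_gt (t - s) ((u - s) / 2) with hc | hc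
  · exact key1d_half hK hsu hφ hφ₁ h0s h0u t ht hc
  · -- reflect
    set ρ : ℝ → ℝ := fun r => s + u - r with hρ
    have hρmap : MapsTo ρ (Icc s u) (Icc s u) := by
      intro r hr; constructor <;> simp only [hρ] <;> [linarith [hr.2]; linarith [hr.1]]
    have hφ' : ∀ r ∈ Icc s u, HasDerivWithinAt (φ ∘ ρ) (-φ₁ (ρ r)) (Icc s u) r := by
      intro r hr
      have hρd : HasDerivWithinAt ρ (-1) (Icc s u) r := by
        simpa using ((hasDerivAt_id r).const_sub (s + u)).hasDerivWithinAt
      have := (hφ (ρ r) (hρmap hr)).comp r hρd hρmap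
      simpa using this
    have key := key1d_half hK hsu hφ' (φ₁ := fun r => -φ₁ (ρ r))
      (fun p q hp hpq hq => by
        have h1 : s ≤ ρ q := by simp only [hρ]; linarith
        have h2 : ρ q ≤ ρ p := by simp only [hρ]; linarith
        have h3 : ρ p ≤ u := by simp only [hρ]; linarith
        have hb := hφ₁ (ρ q) (ρ p) h1 h2 h3
        have heq : -φ₁ (ρ q) - -φ₁ (ρ p) = φ₁ (ρ p) - φ₁ (ρ q) := by ring
        rw [heq]
        calc |φ₁ (ρ p) - φ₁ (ρ q)| ≤ K * (ρ p - ρ q) := hb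
          _ = K * (q - p) := by simp only [hρ]; ring)
      (by simp only [Function.comp, hρ]; rw [show s + u - s = u by ring, h0u])
      (by simp only [Function.comp, hρ]; rw [show s + u - u = s by ring, h0s])
      (s + u - t) ⟨by linarith [ht.2], by linarith [ht.1]⟩ (by linarith)
    simpa [hρ, Function.comp, show s + u - (s + u - t) = t by ring] using key

/-- Deterministic content of Theorem 4 of the paper: if `g` interpolates `f` on all hyperplane
slices through the grid points of a box `X = ∏ [aᵢ, bᵢ]` of mesh at most `h`, and both functions
are twice continuously differentiable with all second-order partial derivatives bounded by `M`,
then `sup_{x ∈ X} |g(x) − f(x)| ≤ 2M · min_i (bᵢ − aᵢ)^{1/2} · h^{3/2}`. -/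
theorem function_uniform_rate_on_grid
    (d : ℕ) (hd : 0 < d) (a b : Fin d → ℝ) (hab : ∀ i, a i < b i)
    (X : Set (EuclideanSpace ℝ (Fin d)))
    (hXdef : X = {x : EuclideanSpace ℝ (Fin d) | ∀ i, x i ∈ Icc (a i) (b i)})
    (m : Fin d → ℕ) (hm : ∀ i, 2 ≤ m i)
    (grid : (i : Fin d) → Fin (m i) → ℝ)
    (hmono : ∀ i, StrictMono (grid i))
    (hfirst : ∀ i, grid i ⟨0, by have := hm i; omega⟩ = a i)
    (hlast : ∀ i, grid i ⟨m i - 1, by have := hm i; omega⟩ = b i)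
    (h : ℝ)
    (hmesh : ∀ i, ∀ j k : Fin (m i), (k : ℕ) = (j : ℕ) + 1 → grid i k - grid i j ≤ h)
    (M : ℝ) (hM : 0 < M)
    (f g : EuclideanSpace ℝ (Fin d) → ℝ)
    (hf : ContDiffOn ℝ 2 f X) (hg : ContDiffOn ℝ 2 g X)
    (hfbd : ∀ x ∈ X, ∀ i j : Fin d,
      |fderivWithin ℝ (fun y => fderivWithin ℝ f X y (EuclideanSpace.single i 1)) X x
        (EuclideanSpace.single j 1)| ≤ M)
    (hgbd : ∀ x ∈ X, ∀ i j : Fin d,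
      |fderivWithin ℝ (fun y => fderivWithin ℝ g X y (EuclideanSpace.single i 1)) X x
        (EuclideanSpace.single j 1)| ≤ M)
    (hinterp : ∀ x ∈ X, (∃ i : Fin d, ∃ j : Fin (m i), x i = grid i j) → g x = f x) :
    ∀ x ∈ X,
      |g x - f x| ≤ 2 * M * (⨅ i : Fin d, Real.sqrt (b i - a i)) * h ^ ((3 : ℝ) / 2) := by
  haveI : Nonempty (Fin d) := ⟨⟨0, hd⟩⟩
  -- h is positive
  have hh0 : 0 < h := by
    obtain ⟨i⟩ := (inferInstance : Nonempty (Fin d))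
    have h2 := hm i
    have := hmesh i ⟨0, by omega⟩ ⟨1, by omega⟩ rfl
    have hlt : grid i ⟨0, by omega⟩ < grid i ⟨1, by omega⟩ := hmono i (by simp [Fin.lt_def])
    linarith
  -- argmin coordinate
  obtain ⟨i₀, -, hi₀min⟩ := Finset.exists_min_image Finset.univ
    (fun i => Real.sqrt (b i - a i)) ⟨Classical.arbitrary _, Finset.mem_univ _⟩
  have hinf : (⨅ i : Fin d, Real.sqrt (b i - a i)) = Real.sqrt (b i₀ - a i₀) := by
    refine le_antisymm (ciInf_le (Finite.bddBelow_range _) i₀) ?_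
    exact le_ciInf fun i => hi₀min i (Finset.mem_univ i)
  rw [hinf]
  -- convexity & unique differentiability of X
  have hconv : Convex ℝ X := by
    rw [hXdef]
    intro p hp q hq α β hα hβ hαβ j
    have h1 : (α • p + β • q) j = α • (p j) + β • (q j) := by
      simp [PiLp.add_apply, PiLp.smul_apply]
    rw [h1]
    exact convex_Icc (a j) (b j) (hp j) (hq j) hα hβ hαβ
  have hint : (interior X).Nonempty := by
    set c : EuclideanSpace ℝ (Fin d) := WithLp.toLp 2 (fun i => (a i + b i) / 2) with hc
    set r : ℝ := Finset.univ.inf' Finset.univ_nonempty (fun i => (b i - a i) / 2) with hr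
    have hr0 : 0 < r := by
      rw [hr, Finset.lt_inf'_iff]
      intro i _
      have := hab i; linarith
    refine ⟨c, mem_interior.2 ⟨Metric.ball c r, ?_, Metric.isOpen_ball, Metric.mem_ball_self hr0⟩⟩
    intro y hy
    rw [hXdef]
    intro j
    have hdj : dist (y j) (c j) ≤ dist y c := by
      rw [EuclideanSpace.dist_eq]
      have h1 : dist (y j) (c j) ^ 2 ≤ ∑ i, dist (y i) (c i) ^ 2 :=
        Finset.single_le_sum (f := fun i => dist (y i) (c i) ^ 2)
          (fun i _ => sq_nonneg _) (Finset.mem_univ j)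
      calc dist (y j) (c j) = Real.sqrt (dist (y j) (c j) ^ 2) :=
            (Real.sqrt_sq dist_nonneg).symm
        _ ≤ _ := Real.sqrt_le_sqrt h1
    have hlt : dist (y j) (c j) < r := lt_of_le_of_lt hdj hy
    have hrle : r ≤ (b j - a j) / 2 := Finset.inf'_le _ (Finset.mem_univ j)
    have hcj : c j = (a j + b j) / 2 := rfl
    rw [Real.dist_eq, hcj] at hlt
    have := abs_lt.1 (lt_of_lt_of_le hlt hrle)
    constructor <;> [linarith [this.1]; linarith [this.2]]
  have hXu : UniqueDiffOn ℝ X := uniqueDiffOn_convex hconv hint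
  -- derivative machinery
  set v : EuclideanSpace ℝ (Fin d) := EuclideanSpace.single i₀ 1 with hv
  intro x hx
  have hxX : ∀ j, x j ∈ Icc (a j) (b j) := by rw [hXdef] at hx; exact hx
  set L : ℝ → EuclideanSpace ℝ (Fin d) := fun t => x + (t - x i₀) • v with hLdef
  have hL : ∀ t j, L t j = if j = i₀ then t else x j := by
    intro t j
    simp only [hLdef, PiLp.add_apply, PiLp.smul_apply, hv, EuclideanSpace.single_apply,
      smul_eq_mul]
    split_ifs with hj
    · rw [hj]; ring
    · ring
  have hLX : ∀ t ∈ Icc (a i₀) (b i₀), L t ∈ X := by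
    intro t ht
    rw [hXdef]
    intro j
    rw [hL]
    split_ifs with hj
    · subst hj; exact ht
    · exact hxX j
  have hLd : ∀ t : ℝ, HasDerivAt L v t := by
    intro t
    have : HasDerivAt (fun t : ℝ => (t - x i₀) • v) ((1 : ℝ) • v) t :=
      ((hasDerivAt_id t).sub_const (x i₀)).smul_const v
    simpa only [one_smul] using this.const_add x
  set e : EuclideanSpace ℝ (Fin d) → ℝ := fun y => g y - f y with he
  have heC : ContDiffOn ℝ 2 e X := hg.sub hf
  have heD : DifferentiableOn ℝ e X := heC.differentiableOn (by norm_num)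
  have hfD : DifferentiableOn ℝ f X := hf.differentiableOn (by norm_num)
  have hgD : DifferentiableOn ℝ g X := hg.differentiableOn (by norm_num)
  set ψf : EuclideanSpace ℝ (Fin d) → ℝ := fun y => fderivWithin ℝ f X y v with hψf
  set ψg : EuclideanSpace ℝ (Fin d) → ℝ := fun y => fderivWithin ℝ g X y v with hψg
  set ψe : EuclideanSpace ℝ (Fin d) → ℝ := fun y => fderivWithin ℝ e X y v with hψe
  have hψfD : DifferentiableOn ℝ ψf X :=
    ((hf.fderivWithin (m := 1) hXu (by norm_num)).differentiableOn (by norm_num)).clm_apply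
      (differentiableOn_const v)
  have hψgD : DifferentiableOn ℝ ψg X :=
    ((hg.fderivWithin (m := 1) hXu (by norm_num)).differentiableOn (by norm_num)).clm_apply
      (differentiableOn_const v)
  have hψe_eq : ∀ y ∈ X, ψe y = ψg y - ψf y := by
    intro y hy
    have := fderivWithin_fun_sub (hXu y hy) (hgD y hy) (hfD y hy)
    simp only [hψe, hψg, hψf, he]
    rw [this]
    simp
  have hψeD : DifferentiableOn ℝ ψe X :=
    (hψgD.sub hψfD).congr hψe_eq
  set φ : ℝ → ℝ := fun t => e (L t) with hφdef
  set φ₁ : ℝ → ℝ := fun t => ψe (L t) with hφ₁def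
  set φ₂ : ℝ → ℝ := fun t => fderivWithin ℝ ψe X (L t) v with hφ₂def
  set I : Set ℝ := Icc (a i₀) (b i₀) with hI
  have hφd : ∀ t ∈ I, HasDerivWithinAt φ (φ₁ t) I t := by
    intro t ht
    have h1 : HasFDerivWithinAt e (fderivWithin ℝ e X (L t)) X (L t) :=
      (heD (L t) (hLX t ht)).hasFDerivWithinAt
    have h2 : HasDerivWithinAt L v I t := (hLd t).hasDerivWithinAt
    exact h1.comp_hasDerivWithinAt t h2 (fun r hr => hLX r hr)
  have hφ₁d : ∀ t ∈ I, HasDerivWithinAt φ₁ (φ₂ t) I t := by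
    intro t ht
    have h1 : HasFDerivWithinAt ψe (fderivWithin ℝ ψe X (L t)) X (L t) :=
      (hψeD (L t) (hLX t ht)).hasFDerivWithinAt
    have h2 : HasDerivWithinAt L v I t := (hLd t).hasDerivWithinAt
    exact h1.comp_hasDerivWithinAt t h2 (fun r hr => hLX r hr)
  have hφ₂bd : ∀ t ∈ I, |φ₂ t| ≤ 2 * M := by
    intro t ht
    have hy : L t ∈ X := hLX t ht
    have e1 : fderivWithin ℝ ψe X (L t) = fderivWithin ℝ (fun z => ψg z - ψf z) X (L t) :=
      fderivWithin_congr hψe_eq (hψe_eq _ hy)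
    have e2 : fderivWithin ℝ (fun z => ψg z - ψf z) X (L t)
        = fderivWithin ℝ ψg X (L t) - fderivWithin ℝ ψf X (L t) :=
      fderivWithin_fun_sub (hXu _ hy) (hψgD _ hy) (hψfD _ hy)
    have : φ₂ t = fderivWithin ℝ ψg X (L t) v - fderivWithin ℝ ψf X (L t) v := by
      rw [hφ₂def]; simp only; rw [e1, e2]; simp
    rw [this]
    calc |fderivWithin ℝ ψg X (L t) v - fderivWithin ℝ ψf X (L t) v|
        ≤ |fderivWithin ℝ ψg X (L t) v| + |fderivWithin ℝ ψf X (L t) v| := abs_sub _ _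
      _ ≤ M + M := add_le_add (hgbd _ hy i₀ i₀) (hfbd _ hy i₀ i₀)
      _ = 2 * M := by ring
  -- choose the bracketing grid interval
  set S : Finset (Fin (m i₀)) := Finset.univ.filter (fun j => grid i₀ j ≤ x i₀) with hS
  have hm2 := hm i₀
  have hSne : S.Nonempty := by
    refine ⟨⟨0, by omega⟩, ?_⟩
    simp only [hS, Finset.mem_filter]
    exact ⟨Finset.mem_univ _, by rw [hfirst i₀]; exact (hxX i₀).1⟩
  set j₀ : Fin (m i₀) := S.max' hSne with hj₀
  have hj₀le : grid i₀ j₀ ≤ x i₀ := by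
    have := S.max'_mem hSne
    simp only [hS, Finset.mem_filter] at this
    exact this.2
  have hj₀max : ∀ j : Fin (m i₀), grid i₀ j ≤ x i₀ → j ≤ j₀ := by
    intro j hj
    exact S.le_max' j (by simp only [hS, Finset.mem_filter]; exact ⟨Finset.mem_univ _, hj⟩)
  have hRHS0 : 0 ≤ 2 * M * Real.sqrt (b i₀ - a i₀) * h ^ ((3:ℝ)/2) := by
    have := Real.sqrt_nonneg (b i₀ - a i₀)
    have := Real.rpow_nonneg hh0.le ((3:ℝ)/2)
    positivity
  by_cases hcase : (j₀ : ℕ) = m i₀ - 1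
  · -- x i₀ is a grid point
    have hj₀eq : j₀ = ⟨m i₀ - 1, by omega⟩ := Fin.ext hcase
    have hb' : grid i₀ j₀ = b i₀ := by rw [hj₀eq]; exact hlast i₀
    have hxb : x i₀ = grid i₀ j₀ := le_antisymm (by rw [hb']; exact (hxX i₀).2) hj₀le
    have := hinterp x hx ⟨i₀, j₀, hxb⟩
    rw [this, sub_self, abs_zero]
    exact hRHS0
  · -- proper interior interval
    have hj₀lt : (j₀ : ℕ) < m i₀ - 1 := lt_of_le_of_ne (by omega) hcase
    set j₁ : Fin (m i₀) := ⟨(j₀ : ℕ) + 1, by omega⟩ with hj₁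
    set s : ℝ := grid i₀ j₀ with hs
    set u : ℝ := grid i₀ j₁ with hu
    have hsu : s < u := hmono i₀ (by simp [hj₁, Fin.lt_def])
    have hxu : x i₀ < u := by
      by_contra hcon
      push_neg at hcon
      have := hj₀max j₁ hcon
      rw [Fin.le_def] at this
      simp [hj₁] at this
    have hsa : a i₀ ≤ s := by
      rw [← hfirst i₀, hs]
      exact (hmono i₀).monotone (by simp [Fin.le_def])
    have hub : u ≤ b i₀ := by
      rw [← hlast i₀, hu]
      exact (hmono i₀).monotone (by simp [Fin.le_def, hj₁]; omega)
    have hsub : Icc s u ⊆ I := Icc_subset_Icc hsa hub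
    have hδh : u - s ≤ h := hmesh i₀ j₀ j₁ (by simp [hj₁])
    -- endpoint values vanish
    have hzero : ∀ t ∈ Icc s u, (∃ j : Fin (m i₀), t = grid i₀ j) → φ t = 0 := by
      intro t ht ⟨j, hj⟩
      have htI : t ∈ I := hsub ht
      have hLt : L t ∈ X := hLX t htI
      have hLti : L t i₀ = t := by rw [hL]; simp
      have := hinterp (L t) hLt ⟨i₀, j, by rw [hLti]; exact hj⟩
      simp only [hφdef, he]
      rw [this, sub_self]
    have h0s : φ s = 0 := hzero s (left_mem_Icc.2 hsu.le) ⟨j₀, rfl⟩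
    have h0u : φ u = 0 := hzero u (right_mem_Icc.2 hsu.le) ⟨j₁, rfl⟩
    -- apply the 1-D estimate
    have hφ' : ∀ t ∈ Icc s u, HasDerivWithinAt φ (φ₁ t) (Icc s u) t :=
      fun t ht => (hφd t (hsub ht)).mono hsub
    have hφ₁' : ∀ p q : ℝ, s ≤ p → p ≤ q → q ≤ u → |φ₁ q - φ₁ p| ≤ 2 * M * (q - p) := by
      intro p q hp hpq hq
      have hsubpq : Icc p q ⊆ I := Icc_subset_Icc (le_trans hsa hp) (le_trans hq hub)
      have hd : ∀ r ∈ Icc p q, HasDerivWithinAt φ₁ (φ₂ r) (Icc p q) r :=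
        fun r hr => (hφ₁d r (hsubpq hr)).mono hsubpq
      have := norm_image_sub_le_of_norm_deriv_le_segment' hd
        (C := 2 * M) (fun r hr => by
          rw [Real.norm_eq_abs]
          exact hφ₂bd r (hsubpq (Ico_subset_Icc_self hr))) q (right_mem_Icc.2 hpq)
      rwa [Real.norm_eq_abs] at this
    have hkey := key1d (by linarith : (0:ℝ) ≤ 2 * M) hsu hφ' hφ₁' h0s h0u (x i₀)
      ⟨hj₀le, hxu.le⟩
    -- φ (x i₀) = g x - f x
    have hLx : L (x i₀) = x := by
      rw [hLdef]; simp
    have hφx : φ (x i₀) = g x - f x := by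
      simp only [hφdef, he]; rw [hLx]
    rw [hφx] at hkey
    -- final numeric estimate
    have hδ0 : 0 < u - s := by linarith
    have hδb : u - s ≤ b i₀ - a i₀ := by linarith
    have hsq : (u - s) ^ 2 ≤ Real.sqrt (b i₀ - a i₀) * h ^ ((3:ℝ)/2) := by
      have e1 : (u - s) ^ 2 = (u - s) ^ ((1:ℝ)/2) * (u - s) ^ ((3:ℝ)/2) := by
        rw [← Real.rpow_natCast (u - s) 2, ← Real.rpow_add hδ0]
        norm_num
      rw [e1]
      have e2 : (u - s) ^ ((1:ℝ)/2) ≤ Real.sqrt (b i₀ - a i₀) := by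
        rw [← Real.sqrt_eq_rpow]
        exact Real.sqrt_le_sqrt hδb
      have e3 : (u - s) ^ ((3:ℝ)/2) ≤ h ^ ((3:ℝ)/2) :=
        Real.rpow_le_rpow hδ0.le hδh (by norm_num)
      exact mul_le_mul e2 e3 (Real.rpow_nonneg hδ0.le _) (Real.sqrt_nonneg _)
    calc |g x - f x| ≤ 2 * M * (u - s) ^ 2 := hkey
      _ ≤ 2 * M * (Real.sqrt (b i₀ - a i₀) * h ^ ((3:ℝ)/2)) :=
          mul_le_mul_of_nonneg_left hsq (by linarith)
      _ = 2 * M * Real.sqrt (b i₀ - a i₀) * h ^ ((3:ℝ)/2) := by ring
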